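/- Assume M_nature = ∅ (so p̄_{0,μ} is given for every μ ∈ M and Σ_{0,μ,μ} = (1/p̄_{0,μ}) V* for all μ ∈ M). Then for every μ ∈ M_l and every integer T ≥ 1, the following lower bound holds in the positive semidefinite order: Σ_{T,μ,μ} ⪰ ( ∑_{t=1}^{T} b_{T,t} (∑_{ν∈M_l} J̄_{T,t+1,μ,ν})² / (∑_{ν∈M_l} w_{t,ν}) + b_{T,0} / (∑_{ν∈M} p̄_{0,ν}) ) · V*. -/

import Mathlib

open Matrix Finset Filter

noncomputable section

/-- In-neighbourhood of `μ` in the directed graph with edge set `E`. -/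
def Nin {K : ℕ} (E : Finset (Fin K × Fin K)) (μ : Fin K) : Finset (Fin K) :=
  Finset.univ.filter (fun ν => (ν, μ) ∈ E)

/-- The set of learning models (those with at least one incoming edge). -/
def Ml {K : ℕ} (E : Finset (Fin K × Fin K)) : Finset (Fin K) :=
  Finset.univ.filter (fun μ => Nin E μ ≠ ∅)

/-- The set of models with no incoming edge (stable data sources). -/
def Mu {K : ℕ} (E : Finset (Fin K × Fin K)) : Finset (Fin K) :=
  Finset.univ.filter (fun μ => Nin E μ = ∅)

/-- The edge relation: `EdgeRel E a b` iff `(a, b) ∈ E`. -/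
def EdgeRel {K : ℕ} (E : Finset (Fin K × Fin K)) : Fin K → Fin K → Prop :=
  fun a b => (a, b) ∈ E

open Classical in
/-- Models in `M_l` not reachable by a directed path from any node of `M_u`. -/
def MlInf {K : ℕ} (E : Finset (Fin K × Fin K)) : Finset (Fin K) :=
  (Ml E).filter (fun μ => ∀ ν ∈ Mu E, ¬ Relation.TransGen (EdgeRel E) ν μ)

open Classical in
/-- Models in `M_l^∞` together with models reachable from some node of `M_l^∞`. -/
def Mlc {K : ℕ} (E : Finset (Fin K × Fin K)) : Finset (Fin K) :=
  (Ml E).filter (fun μ => μ ∈ MlInf E ∨ ∃ ν ∈ MlInf E, Relation.TransGen (EdgeRel E) ν μ)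

/-- The non-collapsing learning models. -/
def Mlnc {K : ℕ} (E : Finset (Fin K × Fin K)) : Finset (Fin K) := Ml E \ Mlc E

/-- The total limiting proportion `w_{t,ν} = ∑_{m ∈ Nin(ν)} p̄_{t,m→ν}`. -/
def wgt {K : ℕ} (E : Finset (Fin K × Fin K)) (pbar : ℕ → Fin K → Fin K → ℝ)
    (t : ℕ) (ν : Fin K) : ℝ :=
  ∑ m ∈ Nin E ν, pbar t m ν

/-- The row-stochastic matrix `P̄_t`: `P̄_{t,μ,ν} = p̄_{t,ν→μ}/w_{t,μ}` if `μ ∈ M_l` and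
`ν ∈ Nin(μ)`, `P̄_{t,μ,μ} = 1` if `μ ∈ M_u`, and `0` otherwise. -/
def Pbar {K : ℕ} (E : Finset (Fin K × Fin K)) (pbar : ℕ → Fin K → Fin K → ℝ)
    (t : ℕ) : Matrix (Fin K) (Fin K) ℝ :=
  Matrix.of fun μ ν =>
    if μ ∈ Ml E then (if ν ∈ Nin E μ then pbar t ν μ / wgt E pbar t μ else 0)
    else (if μ = ν then 1 else 0)

/-- `Jmat P t s = P_t P_{t−1} ⋯ P_s` (equal to `I` when `s = t + 1`). -/
def Jmat {K : ℕ} (P : ℕ → Matrix (Fin K) (Fin K) ℝ) (t s : ℕ) : Matrix (Fin K) (Fin K) ℝ :=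
  ((List.range' s (t + 1 - s)).reverse.map P).prod

/-- The Kronecker product `Q ⊗ I_d`, as a `dK × dK` matrix with blocks indexed by `Fin K`. -/
def kronId {K d : ℕ} (Q : Matrix (Fin K) (Fin K) ℝ) :
    Matrix (Fin K × Fin d) (Fin K × Fin d) ℝ :=
  Matrix.of fun p r => Q p.1 r.1 * (if p.2 = r.2 then 1 else 0)

/-- The block matrix `Σ_0`: `Σ_{0,μ,ν} = (1/p̄_{0,μ}) V*` if `μ = ν ∉ M_nature`, else `0`. -/
def Sigma0 {K d : ℕ} (Mnature : Finset (Fin K)) (p0 : Fin K → ℝ)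
    (Vstar : Matrix (Fin d) (Fin d) ℝ) : Matrix (Fin K × Fin d) (Fin K × Fin d) ℝ :=
  Matrix.of fun p r =>
    if p.1 = r.1 ∧ p.1 ∉ Mnature then (1 / p0 p.1) * Vstar p.2 r.2 else 0

/-- The block matrix `V_t`: `V_{t,μ,ν} = (q_{t,μ∩ν}/(w_{t,μ}w_{t,ν})) V*` if `μ, ν ∈ M_l`,
else `0`. -/
def Vt {K d : ℕ} (E : Finset (Fin K × Fin K)) (pbar : ℕ → Fin K → Fin K → ℝ)
    (q : ℕ → Fin K → Fin K → ℝ) (Vstar : Matrix (Fin d) (Fin d) ℝ) (t : ℕ) :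
    Matrix (Fin K × Fin d) (Fin K × Fin d) ℝ :=
  Matrix.of fun p r =>
    if p.1 ∈ Ml E ∧ r.1 ∈ Ml E then
      (q t p.1 r.1 / (wgt E pbar t p.1 * wgt E pbar t r.1)) * Vstar p.2 r.2
    else 0

end

noncomputable section AuxProof

section Aux

variable {K : ℕ} (E : Finset (Fin K × Fin K)) (pbar : ℕ → Fin K → Fin K → ℝ)
  (q : ℕ → Fin K → Fin K → ℝ) (p0 : Fin K → ℝ) (c : ℕ → ℝ)

def Qmat (t : ℕ) : Matrix (Fin K) (Fin K) ℝ :=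
  Matrix.of fun μ ν => if μ ∈ Ml E ∧ ν ∈ Ml E then
    q t μ ν / (wgt E pbar t μ * wgt E pbar t ν) else 0

def Smat : ℕ → Matrix (Fin K) (Fin K) ℝ
  | 0 => Matrix.of fun μ ν => if μ = ν then 1 / p0 μ else 0
  | (t+1) => (c (t+1) / c t) • (Pbar E pbar (t+1) * Smat t * (Pbar E pbar (t+1))ᵀ)
      + Qmat E pbar q (t+1)

lemma Jmat_self (P : ℕ → Matrix (Fin K) (Fin K) ℝ) (t : ℕ) : Jmat P t (t+1) = 1 := by
  simp [Jmat]

lemma Jmat_succ (P : ℕ → Matrix (Fin K) (Fin K) ℝ) {t s : ℕ} (h : s ≤ t + 1) :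
    Jmat P (t+1) s = P (t+1) * Jmat P t s := by
  have h1 : t + 1 + 1 - s = (t + 1 - s) + 1 := by omega
  have h2 : s + (t + 1 - s) = t + 1 := by omega
  rw [Jmat, h1, List.range'_1_concat, h2]
  simp [Jmat, List.reverse_append]

variable {α : ℝ}

lemma mem_Ml {μ : Fin K} : μ ∈ Ml E ↔ (Nin E μ).Nonempty := by
  simp [Ml, Finset.nonempty_iff_ne_empty]

lemma mem_Nin {m ν : Fin K} : m ∈ Nin E ν ↔ (m, ν) ∈ E := by
  simp [Nin]

lemma wgt_pos (hα0 : 0 < α) (hpbarα : ∀ t, 1 ≤ t → ∀ ν μ : Fin K, (ν, μ) ∈ E → α ≤ pbar t ν μ)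
    {t : ℕ} (ht : 1 ≤ t) {ν : Fin K} (hν : ν ∈ Ml E) : 0 < wgt E pbar t ν := by
  refine Finset.sum_pos (fun m hm => lt_of_lt_of_le hα0 ?_) ((mem_Ml E).1 hν)
  exact hpbarα t ht m ν ((mem_Nin E).1 hm)

lemma Pbar_nonneg (hα0 : 0 < α) (hpbarα : ∀ t, 1 ≤ t → ∀ ν μ : Fin K, (ν, μ) ∈ E → α ≤ pbar t ν μ)
    {t : ℕ} (ht : 1 ≤ t) (μ ν : Fin K) : 0 ≤ Pbar E pbar t μ ν := by
  rw [Pbar, Matrix.of_apply]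
  split_ifs with h1 h2 h3
  · exact div_nonneg (le_trans hα0.le (hpbarα t ht ν μ ((mem_Nin E).1 h2)))
      (wgt_pos E pbar hα0 hpbarα ht h1).le
  · exact le_refl 0
  · exact zero_le_one
  · exact le_refl 0

lemma Pbar_row_sum (hα0 : 0 < α) (hpbarα : ∀ t, 1 ≤ t → ∀ ν μ : Fin K, (ν, μ) ∈ E → α ≤ pbar t ν μ)
    {t : ℕ} (ht : 1 ≤ t) (μ : Fin K) : ∑ ν, Pbar E pbar t μ ν = 1 := by
  rw [Pbar]
  by_cases h : μ ∈ Ml E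
  · simp only [Matrix.of_apply, if_pos h]
    rw [Finset.sum_ite_mem, Finset.univ_inter, ← Finset.sum_div]
    rw [wgt] at *
    exact div_self (ne_of_gt (wgt_pos E pbar hα0 hpbarα ht h))
  · simp [h]

end Aux

section Aux2

variable {K : ℕ} (E : Finset (Fin K × Fin K)) (pbar : ℕ → Fin K → Fin K → ℝ)
  (q : ℕ → Fin K → Fin K → ℝ) (p0 : Fin K → ℝ) (c : ℕ → ℝ) {α : ℝ}

lemma vecMul_Pbar_sum (hα0 : 0 < α)
    (hpbarα : ∀ t, 1 ≤ t → ∀ ν μ : Fin K, (ν, μ) ∈ E → α ≤ pbar t ν μ)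
    {t : ℕ} (ht : 1 ≤ t) (x : Fin K → ℝ) :
    ∑ ν, (x ᵥ* Pbar E pbar t) ν = ∑ ν, x ν := by
  simp only [Matrix.vecMul, dotProduct]
  rw [Finset.sum_comm]
  refine Finset.sum_congr rfl fun i _ => ?_
  rw [← Finset.mul_sum, Pbar_row_sum E pbar hα0 hpbarα ht i, mul_one]

lemma vecMul_Pbar_nonneg (hα0 : 0 < α)
    (hpbarα : ∀ t, 1 ≤ t → ∀ ν μ : Fin K, (ν, μ) ∈ E → α ≤ pbar t ν μ)
    {t : ℕ} (ht : 1 ≤ t) {x : Fin K → ℝ} (hx : ∀ i, 0 ≤ x i) (ν : Fin K) :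
    0 ≤ (x ᵥ* Pbar E pbar t) ν := by
  simp only [Matrix.vecMul, dotProduct]
  exact Finset.sum_nonneg fun i _ =>
    mul_nonneg (hx i) (Pbar_nonneg E pbar hα0 hpbarα ht i ν)

lemma Q_quadform (hα0 : 0 < α)
    (hpbarα : ∀ t, 1 ≤ t → ∀ ν μ : Fin K, (ν, μ) ∈ E → α ≤ pbar t ν μ)
    (hqnn : ∀ t, 1 ≤ t → ∀ ν₁ ∈ Ml E, ∀ ν₂ ∈ Ml E, 0 ≤ q t ν₁ ν₂)
    (hqdiag : ∀ t, 1 ≤ t → ∀ ν ∈ Ml E, q t ν ν = wgt E pbar t ν)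
    {t : ℕ} (ht : 1 ≤ t) (x : Fin K → ℝ) (hx : ∀ i, 0 ≤ x i) :
    (∑ ν ∈ Ml E, x ν) ^ 2 / (∑ ν ∈ Ml E, wgt E pbar t ν)
      ≤ x ⬝ᵥ (Qmat E pbar q t).mulVec x := by
  have hmem : ∀ (f : Fin K → ℝ), ∑ ν ∈ Ml E, f ν = ∑ ν, if ν ∈ Ml E then f ν else 0 := by
    intro f; rw [Finset.sum_ite_mem, Finset.univ_inter]
  have h1 : x ⬝ᵥ (Qmat E pbar q t).mulVec x
      = ∑ μ ∈ Ml E, ∑ ν ∈ Ml E,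
          x μ * (q t μ ν / (wgt E pbar t μ * wgt E pbar t ν)) * x ν := by
    simp only [dotProduct, Matrix.mulVec, Qmat, Matrix.of_apply, hmem, Finset.mul_sum]
    refine Finset.sum_congr rfl fun μ _ => ?_
    by_cases hμ : μ ∈ Ml E
    · simp only [hμ, if_true, true_and]
      refine Finset.sum_congr rfl fun ν _ => ?_
      split_ifs with h <;> ring
    · simp [hμ]
  rw [h1]
  have hwpos : ∀ ν ∈ Ml E, 0 < wgt E pbar t ν :=
    fun ν hν => wgt_pos E pbar hα0 hpbarα ht hν
  have h2 : ∑ ν ∈ Ml E, x ν ^ 2 / wgt E pbar t ν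
      ≤ ∑ μ ∈ Ml E, ∑ ν ∈ Ml E,
          x μ * (q t μ ν / (wgt E pbar t μ * wgt E pbar t ν)) * x ν := by
    refine Finset.sum_le_sum fun μ hμ => ?_
    have hdiag : x μ ^ 2 / wgt E pbar t μ
        = x μ * (q t μ μ / (wgt E pbar t μ * wgt E pbar t μ)) * x μ := by
      rw [hqdiag t ht μ hμ]
      have hw := (hwpos μ hμ).ne'
      field_simp
    rw [hdiag]
    refine Finset.single_le_sum (f := fun ν => x μ * (q t μ ν / (wgt E pbar t μ * wgt E pbar t ν)) * x ν) (fun ν hν => ?_) hμ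
    exact mul_nonneg (mul_nonneg (hx μ) (div_nonneg (hqnn t ht μ hμ ν hν)
      (mul_nonneg (hwpos μ hμ).le (hwpos ν hν).le))) (hx ν)
  refine le_trans ?_ h2
  exact Finset.sq_sum_div_le_sum_sq_div (Ml E) x hwpos

lemma S0_quadform (x : Fin K → ℝ) :
    x ⬝ᵥ (Smat E pbar q p0 c 0).mulVec x = ∑ ν, x ν ^ 2 / p0 ν := by
  simp only [Smat, dotProduct, Matrix.mulVec, Matrix.of_apply, ite_mul, zero_mul]
  refine Finset.sum_congr rfl fun μ _ => ?_
  rw [Finset.sum_ite_eq, if_pos (Finset.mem_univ μ)]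
  ring

end Aux2

section Aux3

variable {K : ℕ} (E : Finset (Fin K × Fin K)) (pbar : ℕ → Fin K → Fin K → ℝ)
  (q : ℕ → Fin K → Fin K → ℝ) (p0 : Fin K → ℝ) (c : ℕ → ℝ) {α : ℝ}

lemma key_lemma (hα0 : 0 < α)
    (hpbarα : ∀ t, 1 ≤ t → ∀ ν μ : Fin K, (ν, μ) ∈ E → α ≤ pbar t ν μ)
    (hqnn : ∀ t, 1 ≤ t → ∀ ν₁ ∈ Ml E, ∀ ν₂ ∈ Ml E, 0 ≤ q t ν₁ ν₂)
    (hqdiag : ∀ t, 1 ≤ t → ∀ ν ∈ Ml E, q t ν ν = wgt E pbar t ν)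
    (hp0 : ∀ ν, 0 < p0 ν) (hc : ∀ t, 0 < c t) :
    ∀ T : ℕ, ∀ x : Fin K → ℝ, (∀ i, 0 ≤ x i) →
      (∑ t ∈ Finset.Icc 1 T,
          (c T / c t) * (∑ ν ∈ Ml E, (x ᵥ* Jmat (Pbar E pbar) T (t + 1)) ν) ^ 2 /
            (∑ ν ∈ Ml E, wgt E pbar t ν))
        + (c T / c 0) * (∑ ν, x ν) ^ 2 / (∑ ν, p0 ν)
      ≤ x ⬝ᵥ (Smat E pbar q p0 c T).mulVec x := by
  intro T
  induction T with
  | zero =>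
    intro x hx
    rw [S0_quadform]
    simp only [Finset.Icc_eq_empty_of_lt Nat.zero_lt_one, Finset.sum_empty, zero_add,
      div_self (hc 0).ne']
    rw [one_mul]
    exact Finset.sq_sum_div_le_sum_sq_div Finset.univ x (fun ν _ => hp0 ν)
  | succ T ih =>
    intro x hx
    have hT1 : (1:ℕ) ≤ T + 1 := Nat.le_add_left 1 T
    set y := x ᵥ* Pbar E pbar (T + 1) with hy
    have hynn : ∀ i, 0 ≤ y i := fun i => vecMul_Pbar_nonneg E pbar hα0 hpbarα hT1 hx i
    have hysum : ∑ ν, y ν = ∑ ν, x ν := vecMul_Pbar_sum E pbar hα0 hpbarα hT1 x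
    set r := c (T + 1) / c T with hr
    have hrpos : 0 < r := div_pos (hc (T + 1)) (hc T)
    -- right-hand side decomposition
    have hrhs : x ⬝ᵥ (Smat E pbar q p0 c (T + 1)).mulVec x
        = r * (y ⬝ᵥ (Smat E pbar q p0 c T).mulVec y)
          + x ⬝ᵥ (Qmat E pbar q (T + 1)).mulVec x := by
      rw [show Smat E pbar q p0 c (T + 1)
          = r • (Pbar E pbar (T+1) * Smat E pbar q p0 c T * (Pbar E pbar (T+1))ᵀ)
            + Qmat E pbar q (T+1) from rfl]
      rw [Matrix.add_mulVec, dotProduct_add, Matrix.smul_mulVec,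
        dotProduct_smul, smul_eq_mul]
      congr 1
      rw [← Matrix.mulVec_mulVec, ← Matrix.mulVec_mulVec, Matrix.mulVec_transpose,
        Matrix.dotProduct_mulVec, Matrix.dotProduct_mulVec, ← hy]
    rw [hrhs]
    -- left-hand side decomposition
    rw [Finset.sum_Icc_succ_top hT1]
    have hfT1 : (c (T+1) / c (T+1)) * (∑ ν ∈ Ml E, (x ᵥ* Jmat (Pbar E pbar) (T+1) (T+1+1)) ν) ^ 2 /
          (∑ ν ∈ Ml E, wgt E pbar (T+1) ν)
        = (∑ ν ∈ Ml E, x ν) ^ 2 / (∑ ν ∈ Ml E, wgt E pbar (T+1) ν) := by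
      rw [Jmat_self, Matrix.vecMul_one, div_self (hc (T+1)).ne', one_mul]
    rw [hfT1]
    have hsum : ∑ t ∈ Finset.Icc 1 T,
          (c (T+1) / c t) * (∑ ν ∈ Ml E, (x ᵥ* Jmat (Pbar E pbar) (T+1) (t + 1)) ν) ^ 2 /
            (∑ ν ∈ Ml E, wgt E pbar t ν)
        = r * ∑ t ∈ Finset.Icc 1 T,
            (c T / c t) * (∑ ν ∈ Ml E, (y ᵥ* Jmat (Pbar E pbar) T (t + 1)) ν) ^ 2 /
              (∑ ν ∈ Ml E, wgt E pbar t ν) := by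
      rw [Finset.mul_sum]
      refine Finset.sum_congr rfl fun t htmem => ?_
      have htT : t + 1 ≤ T + 1 := by
        have := (Finset.mem_Icc.1 htmem).2; omega
      rw [Jmat_succ (Pbar E pbar) htT, ← Matrix.vecMul_vecMul, ← hy]
      have hcc : c (T+1) / c t = r * (c T / c t) := by
        have h1 : c T ≠ 0 := (hc T).ne'
        have h2 : c t ≠ 0 := (hc t).ne'
        rw [hr]
        field_simp
      rw [hcc]; ring
    rw [hsum]
    have hC : c (T+1) / c 0 * (∑ ν, x ν) ^ 2 / (∑ ν, p0 ν)
        = r * (c T / c 0 * (∑ ν, y ν) ^ 2 / (∑ ν, p0 ν)) := by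
      rw [hysum]
      have hcc : c (T+1) / c 0 = r * (c T / c 0) := by
        have h1 : c T ≠ 0 := (hc T).ne'
        have h2 : c 0 ≠ 0 := (hc 0).ne'
        rw [hr]
        field_simp
      rw [hcc]; ring
    rw [hC]
    have hIH := ih y hynn
    have hQ := Q_quadform E pbar q hα0 hpbarα hqnn hqdiag hT1 x hx
    nlinarith [mul_le_mul_of_nonneg_left hIH hrpos.le]

end Aux3

section Aux4

variable {K d : ℕ} (E : Finset (Fin K × Fin K)) (pbar : ℕ → Fin K → Fin K → ℝ)
  (q : ℕ → Fin K → Fin K → ℝ) (p0 : Fin K → ℝ) (c : ℕ → ℝ)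
  (Vstar : Matrix (Fin d) (Fin d) ℝ)

lemma kron_conj_entry (P : Matrix (Fin K) (Fin K) ℝ) (S : Matrix (Fin K) (Fin K) ℝ)
    (Sig : Matrix (Fin K × Fin d) (Fin K × Fin d) ℝ)
    (hSig : ∀ μ ν a b, Sig (μ, a) (ν, b) = S μ ν * Vstar a b)
    (μ ν : Fin K) (a b : Fin d) :
    (kronId (d := d) P * Sig * (kronId (d := d) P)ᵀ) (μ, a) (ν, b) = (P * S * Pᵀ) μ ν * Vstar a b := by
  simp only [Matrix.mul_apply, Matrix.transpose_apply, kronId, Matrix.of_apply,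
    Fintype.sum_prod_type]
  simp only [hSig, mul_ite, ite_mul, one_mul, mul_one, zero_mul, mul_zero,
    Finset.sum_ite_eq, Finset.mem_univ, if_true]
  simp only [Finset.sum_mul]
  refine Finset.sum_congr rfl fun l _ => ?_
  refine Finset.sum_congr rfl fun k _ => ?_
  ring

lemma Sig_eq
    (Sig : ℕ → Matrix (Fin K × Fin d) (Fin K × Fin d) ℝ)
    (hSig0 : Sig 0 = Sigma0 ∅ p0 Vstar)
    (hSigrec : ∀ t, 1 ≤ t → Sig t =
      (c t / c (t - 1)) • (kronId (Pbar E pbar t) * Sig (t - 1) * (kronId (Pbar E pbar t))ᵀ)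
        + Vt E pbar q Vstar t) :
    ∀ t (μ ν : Fin K) (a b : Fin d),
      Sig t (μ, a) (ν, b) = Smat E pbar q p0 c t μ ν * Vstar a b := by
  intro t
  induction t with
  | zero =>
    intro μ ν a b
    rw [hSig0]
    simp only [Sigma0, Smat, Matrix.of_apply, Finset.notMem_empty, not_false_iff, and_true]
    split_ifs with h
    · ring
    · simp
  | succ t ihs =>
    intro μ ν a b
    rw [hSigrec (t + 1) (Nat.le_add_left 1 t)]
    simp only [Nat.add_sub_cancel, Matrix.add_apply, Matrix.smul_apply, smul_eq_mul]
    rw [kron_conj_entry Vstar (Pbar E pbar (t+1)) (Smat E pbar q p0 c t)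
      (Sig t) (fun μ' ν' a' b' => ihs μ' ν' a' b') μ ν a b]
    have hVt : Vt E pbar q Vstar (t+1) (μ, a) (ν, b)
        = Qmat E pbar q (t+1) μ ν * Vstar a b := by
      simp only [Vt, Qmat, Matrix.of_apply]
      split_ifs with h
      · ring
      · simp
    rw [hVt]
    rw [show Smat E pbar q p0 c (t + 1)
        = (c (t+1) / c t) • (Pbar E pbar (t+1) * Smat E pbar q p0 c t * (Pbar E pbar (t+1))ᵀ)
          + Qmat E pbar q (t+1) from rfl]
    simp only [Matrix.add_apply, Matrix.smul_apply, smul_eq_mul]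
    ring

end Aux4

lemma psd_smul_nonneg {d : ℕ} {M : Matrix (Fin d) (Fin d) ℝ} (hM : M.PosSemidef)
    {r : ℝ} (hr : 0 ≤ r) : (r • M).PosSemidef := by
  constructor
  · rw [Matrix.IsHermitian, Matrix.conjTranspose_smul, hM.1.eq]
    simp
  · intro x
    exact (hM.smul hr).2 x

section Final

variable {K d : ℕ} (E : Finset (Fin K × Fin K)) (pbar : ℕ → Fin K → Fin K → ℝ)

lemma single_vecMul_apply (μ : Fin K) (M : Matrix (Fin K) (Fin K) ℝ) (ν : Fin K) :
    ((Pi.single μ 1 : Fin K → ℝ) ᵥ* M) ν = M μ ν := by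
  simp [Matrix.vecMul, dotProduct, Pi.single_apply, ite_mul, one_mul, zero_mul,
    Finset.sum_ite_eq, Finset.sum_ite_eq']

lemma single_quadform (μ : Fin K) (M : Matrix (Fin K) (Fin K) ℝ) :
    (Pi.single μ 1 : Fin K → ℝ) ⬝ᵥ M.mulVec (Pi.single μ 1) = M μ μ := by
  simp [dotProduct, Matrix.mulVec, Pi.single_apply, ite_mul, mul_ite, one_mul,
    zero_mul, mul_one, mul_zero, Finset.sum_ite_eq, Finset.sum_ite_eq']

end Final

end AuxProof

/-- When `M_nature = ∅`, for every `μ ∈ M_l` and `T ≥ 1`,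
`Σ_{T,μ,μ} ⪰ (∑_{t=1}^T b_{T,t} (∑_{ν∈M_l} J̄_{T,t+1,μ,ν})² / (∑_{ν∈M_l} w_{t,ν})
 + b_{T,0} / (∑_{ν∈M} p̄_{0,ν})) · V*` in the positive semidefinite order. -/
theorem stmt4
    {K d : ℕ} (hK : 1 ≤ K) (hd : 1 ≤ d)
    (E : Finset (Fin K × Fin K))
    (α ᾱ : ℝ) (hα0 : 0 < α) (hα1 : α ≤ 1) (hᾱ : 1 ≤ ᾱ)
    (Mnature : Finset (Fin K)) (hMnat : Mnature ⊆ Mu E)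
    (Vstar : Matrix (Fin d) (Fin d) ℝ) (hVpsd : Vstar.PosSemidef) (hVtr : 0 < Vstar.trace)
    (c : ℕ → ℝ) (hc : ∀ t, 0 < c t)
    (hb : ∀ t s : ℕ, α ≤ c t / c s ∧ c t / c s ≤ ᾱ)
    (pbar : ℕ → Fin K → Fin K → ℝ)
    (hpbarα : ∀ t, 1 ≤ t → ∀ ν μ : Fin K, (ν, μ) ∈ E → α ≤ pbar t ν μ)
    (hpbarsum : ∀ t, 1 ≤ t → ∑ e ∈ E, pbar t e.1 e.2 ≤ 1)
    (p0 : Fin K → ℝ) (hp0α : ∀ μ ∉ Mnature, α ≤ p0 μ)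
    (hp0sum : ∑ μ ∈ Finset.univ \ Mnature, p0 μ ≤ 1)
    (q : ℕ → Fin K → Fin K → ℝ)
    (hqsymm : ∀ t, 1 ≤ t → ∀ ν₁ ∈ Ml E, ∀ ν₂ ∈ Ml E, q t ν₁ ν₂ = q t ν₂ ν₁)
    (hqnn : ∀ t, 1 ≤ t → ∀ ν₁ ∈ Ml E, ∀ ν₂ ∈ Ml E, 0 ≤ q t ν₁ ν₂)
    (hqle : ∀ t, 1 ≤ t → ∀ ν₁ ∈ Ml E, ∀ ν₂ ∈ Ml E,
      q t ν₁ ν₂ ≤ min (wgt E pbar t ν₁) (wgt E pbar t ν₂))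
    (hqdiag : ∀ t, 1 ≤ t → ∀ ν ∈ Ml E, q t ν ν = wgt E pbar t ν)
    (Sig : ℕ → Matrix (Fin K × Fin d) (Fin K × Fin d) ℝ)
    (hSig0 : Sig 0 = Sigma0 Mnature p0 Vstar)
    (hSigrec : ∀ t, 1 ≤ t → Sig t =
      (c t / c (t - 1)) • (kronId (Pbar E pbar t) * Sig (t - 1) * (kronId (Pbar E pbar t))ᵀ)
        + Vt E pbar q Vstar t)
    (hMnatEmpty : Mnature = ∅) :
    ∀ μ ∈ Ml E, ∀ T : ℕ, 1 ≤ T →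
      (Matrix.of (fun a b : Fin d => Sig T (μ, a) (μ, b)) -
        ((∑ t ∈ Finset.Icc 1 T,
            (c T / c t) * (∑ ν ∈ Ml E, Jmat (Pbar E pbar) T (t + 1) μ ν) ^ 2 /
              (∑ ν ∈ Ml E, wgt E pbar t ν)) +
          (c T / c 0) / (∑ ν : Fin K, p0 ν)) • Vstar).PosSemidef := by
  subst hMnatEmpty
  intro μ hμ T hT
  have hp0pos : ∀ ν, 0 < p0 ν := fun ν =>
    lt_of_lt_of_le hα0 (hp0α ν (Finset.notMem_empty ν))
  have hSeq := Sig_eq E pbar q p0 c Vstar Sig hSig0 hSigrec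
  have hxnn : ∀ i, 0 ≤ (Pi.single μ 1 : Fin K → ℝ) i := by
    intro i
    by_cases h : i = μ <;> simp [Pi.single_apply, h]
  have hkey := key_lemma E pbar q p0 c hα0 hpbarα hqnn hqdiag hp0pos hc T
    (Pi.single μ 1) hxnn
  simp only [single_vecMul_apply, single_quadform] at hkey
  have hsum1 : ∑ ν, (Pi.single μ 1 : Fin K → ℝ) ν = (1:ℝ) := by
    simp [Pi.single_apply, Finset.sum_ite_eq, Finset.sum_ite_eq']
  rw [hsum1, one_pow, mul_one] at hkey
  set s : ℝ := (∑ t ∈ Finset.Icc 1 T,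
      (c T / c t) * (∑ ν ∈ Ml E, Jmat (Pbar E pbar) T (t + 1) μ ν) ^ 2 /
        (∑ ν ∈ Ml E, wgt E pbar t ν)) + (c T / c 0) / (∑ ν : Fin K, p0 ν) with hs
  have hmat : Matrix.of (fun a b : Fin d => Sig T (μ, a) (μ, b)) - s • Vstar
      = (Smat E pbar q p0 c T μ μ - s) • Vstar := by
    ext a b
    simp only [Matrix.sub_apply, Matrix.smul_apply, Matrix.of_apply, smul_eq_mul,
      hSeq T μ μ a b]
    ring
  rw [hmat]
  exact psd_smul_nonneg hVpsd (by linarith)
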